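/- For positive integers $m \neq m'$, the groups $H_m$ and $H_{m'}$ are not isomorphic, where $H_m$ is the subgroup of the integer Heisenberg group of upper unitriangular $3 \times 3$ integer matrices $A$ with $m \mid A_{12}$. -/

import Mathlib

open Matrix

/-- A `3 × 3` matrix is upper unitriangular if it has `1`s on the diagonal
and `0`s below the diagonal. -/
def IsUnitri {R : Type*} [CommRing R] (A : Matrix (Fin 3) (Fin 3) R) : Prop :=
  A 0 0 = 1 ∧ A 1 1 = 1 ∧ A 2 2 = 1 ∧ A 1 0 = 0 ∧ A 2 0 = 0 ∧ A 2 1 = 0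

/-- The Heisenberg group over `R`: upper unitriangular `3 × 3` matrices. -/
def Heisenberg (R : Type*) [CommRing R] : Type _ :=
  {A : Matrix (Fin 3) (Fin 3) R // IsUnitri A}

namespace Heisenberg

variable {R : Type*} [CommRing R]

theorem isUnitri_mul {A B : Matrix (Fin 3) (Fin 3) R} (hA : IsUnitri A)
    (hB : IsUnitri B) : IsUnitri (A * B) := by
  obtain ⟨a1, a2, a3, a4, a5, a6⟩ := hA
  obtain ⟨b1, b2, b3, b4, b5, b6⟩ := hB
  refine ⟨?_, ?_, ?_, ?_, ?_, ?_⟩ <;>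
    simp [Matrix.mul_apply, Fin.sum_univ_three, a1, a2, a3, a4, a5, a6,
      b1, b2, b3, b4, b5, b6]

instance : Group (Heisenberg R) where
  mul A B := ⟨A.1 * B.1, isUnitri_mul A.2 B.2⟩
  one := ⟨1, by refine ⟨?_, ?_, ?_, ?_, ?_, ?_⟩ <;> simp [Matrix.one_apply]⟩
  inv A := ⟨!![1, -(A.1 0 1), A.1 0 1 * A.1 1 2 - A.1 0 2;
               0, 1, -(A.1 1 2);
               0, 0, 1], by
    refine ⟨?_, ?_, ?_, ?_, ?_, ?_⟩ <;> simp [Matrix.vecHead, Matrix.vecTail]⟩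
  mul_assoc A B C := Subtype.ext (mul_assoc A.1 B.1 C.1)
  one_mul A := Subtype.ext (one_mul A.1)
  mul_one A := Subtype.ext (mul_one A.1)
  inv_mul_cancel A := by
    obtain ⟨a1, a2, a3, a4, a5, a6⟩ := A.2
    apply Subtype.ext
    show _ * A.1 = (1 : Matrix (Fin 3) (Fin 3) R)
    ext i j
    fin_cases i <;> fin_cases j <;>
      simp [Matrix.mul_apply, Fin.sum_univ_three, Matrix.one_apply,
        a1, a2, a3, a4, a5, a6] <;> ring

@[simp] theorem mul_val (A B : Heisenberg R) : (A * B).1 = A.1 * B.1 := rfl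

@[simp] theorem one_val : ((1 : Heisenberg R)).1 = (1 : Matrix (Fin 3) (Fin 3) R) := rfl

@[simp] theorem inv_val (A : Heisenberg R) :
    (A⁻¹).1 = !![1, -(A.1 0 1), A.1 0 1 * A.1 1 2 - A.1 0 2;
                 0, 1, -(A.1 1 2);
                 0, 0, 1] := rfl

theorem mul_apply_01 (A B : Heisenberg R) :
    (A * B).1 0 1 = A.1 0 1 + B.1 0 1 := by
  obtain ⟨a1, a2, a3, a4, a5, a6⟩ := A.2
  obtain ⟨b1, b2, b3, b4, b5, b6⟩ := B.2
  simp [Matrix.mul_apply, Fin.sum_univ_three, a1, a2, a3, a4, a5, a6,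
    b1, b2, b3, b4, b5, b6]
  ring

end Heisenberg


/-- The subgroup `H_m` of the integer Heisenberg group consisting of matrices
whose `(1,2)`-entry is divisible by `m`. -/
def Hsub (m : ℕ) : Subgroup (Heisenberg ℤ) where
  carrier := {A | (m : ℤ) ∣ A.1 0 1}
  mul_mem' := by
    intro A B hA hB
    simpa [Heisenberg.mul_apply_01] using dvd_add hA hB
  one_mem' := by simp [Matrix.one_apply]
  inv_mem' := by
    intro A hA
    simpa using hA.neg_right

instance Hsub_normal (m : ℕ) : (Hsub m).Normal := by
  constructor
  intro A hA g
  have : (g * A * g⁻¹).1 0 1 = A.1 0 1 := by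
    rw [Heisenberg.mul_apply_01, Heisenberg.mul_apply_01]
    simp
  show (m : ℤ) ∣ _
  rw [this]
  exact hA



section Aux

open Multiplicative
open scoped commutatorElement

theorem Heisenberg.mul_apply_12 (A B : Heisenberg ℤ) :
    (A * B).1 1 2 = A.1 1 2 + B.1 1 2 := by
  obtain ⟨a1, a2, a3, a4, a5, a6⟩ := A.2
  obtain ⟨b1, b2, b3, b4, b5, b6⟩ := B.2
  simp [Matrix.mul_apply, Fin.sum_univ_three, a1, a2, a3, a4, a5, a6,
    b1, b2, b3, b4, b5, b6]
  ring

theorem Heisenberg.mul_apply_02 (A B : Heisenberg ℤ) :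
    (A * B).1 0 2 = A.1 0 2 + B.1 0 2 + A.1 0 1 * B.1 1 2 := by
  obtain ⟨a1, a2, a3, a4, a5, a6⟩ := A.2
  obtain ⟨b1, b2, b3, b4, b5, b6⟩ := B.2
  simp [Matrix.mul_apply, Fin.sum_univ_three, a1, a2, a3, a4, a5, a6,
    b1, b2, b3, b4, b5, b6]
  ring

theorem aux_ediv_add (m : ℕ) {a b : ℤ} (ha : (m:ℤ) ∣ a) (hb : (m:ℤ) ∣ b) :
    (a + b) / (m:ℤ) = a / m + b / m := by
  obtain ⟨s, rfl⟩ := ha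
  obtain ⟨t, rfl⟩ := hb
  rcases eq_or_ne (m:ℤ) 0 with h | h
  · simp [h]
  · rw [← mul_add, Int.mul_ediv_cancel_left _ h, Int.mul_ediv_cancel_left _ h,
      Int.mul_ediv_cancel_left _ h]

/-- The abelianization homomorphism of `Hsub m`. -/
def fH (m : ℕ) : ↥(Hsub m) →* Multiplicative (ℤ × ℤ × ZMod m) where
  toFun A := ofAdd (A.1.1 0 1 / m, A.1.1 1 2, ((A.1.1 0 2 : ℤ) : ZMod m))
  map_one' := by
    have h1 : ((1 : ↥(Hsub m)) : Heisenberg ℤ).1 = (1 : Matrix (Fin 3) (Fin 3) ℤ) := rfl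
    simp [h1, Matrix.one_apply]
  map_mul' := by
    intro A B
    have hAB : ((A * B : ↥(Hsub m)) : Heisenberg ℤ) = (A : Heisenberg ℤ) * B := rfl
    have h01 := Heisenberg.mul_apply_01 (A : Heisenberg ℤ) B
    have h12 := Heisenberg.mul_apply_12 (A : Heisenberg ℤ) B
    have h02 := Heisenberg.mul_apply_02 (A : Heisenberg ℤ) B
    have hdvd : ((m:ℤ) : ZMod m) = 0 := by
      simp
    show ofAdd _ = ofAdd _ * ofAdd _
    rw [← ofAdd_add, Prod.mk_add_mk, Prod.mk_add_mk]
    congr 1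
    simp only [Prod.mk.injEq]
    refine ⟨?_, ?_, ?_⟩
    · show ((A * B : ↥(Hsub m)) : Heisenberg ℤ).1 0 1 / (m:ℤ) = _
      rw [hAB, h01, aux_ediv_add m A.2 B.2]
    · show ((A * B : ↥(Hsub m)) : Heisenberg ℤ).1 1 2 = _
      rw [hAB, h12]
    · show (((A * B : ↥(Hsub m)) : Heisenberg ℤ).1 0 2 : ZMod m) = _
      rw [hAB, h02]
      obtain ⟨t, ht⟩ := A.2
      push_cast [ht, hdvd]
      ring

theorem fH_surjective (m : ℕ) (hm : 0 < m) : Function.Surjective (fH m) := by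
  haveI : NeZero m := ⟨hm.ne'⟩
  intro x
  refine ⟨⟨⟨!![1, (m:ℤ) * (toAdd x).1, ((toAdd x).2.2.val : ℤ);
      0, 1, (toAdd x).2.1; 0, 0, 1], by
    refine ⟨?_, ?_, ?_, ?_, ?_, ?_⟩ <;>
      simp [Matrix.vecHead, Matrix.vecTail]⟩, by
    show (m:ℤ) ∣ _; simp [Matrix.vecHead, Matrix.vecTail]⟩, ?_⟩
  show ofAdd _ = x
  conv_rhs => rw [← ofAdd_toAdd x]
  congr 1
  refine Prod.ext ?_ (Prod.ext ?_ ?_)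
  · show (m:ℤ) * (toAdd x).1 / m = (toAdd x).1
    exact Int.mul_ediv_cancel_left _ (by exact_mod_cast hm.ne')
  · rfl
  · show ((((toAdd x).2.2.val : ℤ)) : ZMod m) = (toAdd x).2.2
    push_cast
    simp [ZMod.natCast_val]

theorem ker_fH (m : ℕ) (hm : 0 < m) : (fH m).ker = commutator ↥(Hsub m) := by
  refine le_antisymm ?_ (Abelianization.commutator_subset_ker (fH m))
  intro A hA
  have h1 : A.1.1 0 1 / (m:ℤ) = 0 ∧ A.1.1 1 2 = 0 ∧ ((A.1.1 0 2 : ℤ) : ZMod m) = 0 := by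
    have := MonoidHom.mem_ker.mp hA
    have h : ((A.1.1 0 1 / (m:ℤ), A.1.1 1 2, ((A.1.1 0 2 : ℤ) : ZMod m)) : ℤ × ℤ × ZMod m) = 0 :=
      this
    exact ⟨congrArg Prod.fst h, congrArg (Prod.fst ∘ Prod.snd) h,
      congrArg (Prod.snd ∘ Prod.snd) h⟩
  obtain ⟨h01, h12, h02⟩ := h1
  have hd : (m:ℤ) ∣ A.1.1 0 1 := A.2
  have h01' : A.1.1 0 1 = 0 := by
    obtain ⟨t, ht⟩ := hd
    rw [ht, Int.mul_ediv_cancel_left _ (by exact_mod_cast hm.ne')] at h01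
    rw [ht, h01, mul_zero]
  obtain ⟨k, hk⟩ := (ZMod.intCast_zmod_eq_zero_iff_dvd _ _).mp h02
  -- x and y: generators whose commutator is A
  set x : ↥(Hsub m) := ⟨⟨!![1, (m:ℤ), 0; 0, 1, 0; 0, 0, 1], by
    refine ⟨?_, ?_, ?_, ?_, ?_, ?_⟩ <;> simp [Matrix.vecHead, Matrix.vecTail]⟩, by
      show (m:ℤ) ∣ _; simp [Matrix.vecHead, Matrix.vecTail]⟩ with hx
  set y : ↥(Hsub m) := ⟨⟨!![1, 0, 0; 0, 1, k; 0, 0, 1], by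
    refine ⟨?_, ?_, ?_, ?_, ?_, ?_⟩ <;> simp [Matrix.vecHead, Matrix.vecTail]⟩, by
      show (m:ℤ) ∣ _; simp [Matrix.vecHead, Matrix.vecTail]⟩ with hy
  have key : A = ⁅x, y⁆ := by
    obtain ⟨a1, a2, a3, a4, a5, a6⟩ := A.1.2
    apply Subtype.ext
    apply Subtype.ext
    show A.1.1 = ((x.1 * y.1) * x.1⁻¹ * y.1⁻¹).1
    have hxv : ((x : ↥(Hsub m)) : Heisenberg ℤ).1 = !![1, (m:ℤ), 0; 0, 1, 0; 0, 0, 1] := rfl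
    have hyv : ((y : ↥(Hsub m)) : Heisenberg ℤ).1 = !![1, 0, 0; 0, 1, k; 0, 0, 1] := rfl
    rw [Heisenberg.mul_val, Heisenberg.mul_val, Heisenberg.inv_val, Heisenberg.inv_val,
      Heisenberg.mul_val, hxv, hyv]
    ext i j
    fin_cases i <;> fin_cases j <;>
      simp [Matrix.mul_apply, Fin.sum_univ_three, a1, a2, a3, a4, a5, a6, h01', h12, hk,
        Matrix.vecHead, Matrix.vecTail] <;> ring
  rw [key]
  exact Subgroup.commutator_mem_commutator (Subgroup.mem_top x) (Subgroup.mem_top y)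

/-- Counting solutions of `x ^ k = 1` in the abelianization model. -/
theorem card_torsion (m k : ℕ) (hm : 0 < m) (hk : 0 < k) (hdvd : m ∣ k) :
    Nat.card {x : Multiplicative (ℤ × ℤ × ZMod m) // x ^ k = 1} = m := by
  haveI : NeZero m := ⟨hm.ne'⟩
  have e : {x : Multiplicative (ℤ × ℤ × ZMod m) // x ^ k = 1} ≃ ZMod m := by
    refine ⟨fun x => (Multiplicative.toAdd x.1).2.2, fun r => ⟨ofAdd (0, 0, r), ?_⟩, ?_, ?_⟩
    · show ofAdd (k • ((0, 0, r) : ℤ × ℤ × ZMod m)) = 1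
      have : k • r = 0 := by
        rw [nsmul_eq_mul]
        obtain ⟨t, rfl⟩ := hdvd
        push_cast
        simp [ZMod.natCast_self]
      simp [Prod.smul_def, this]
    · rintro ⟨x, hx⟩
      have hx' : k • (toAdd x) = 0 := hx
      have hp : (k:ℤ) * (toAdd x).1 = 0 := by
        have := congrArg Prod.fst hx'
        simpa [nsmul_eq_mul] using this
      have hq : (k:ℤ) * (toAdd x).2.1 = 0 := by
        have := congrArg (Prod.fst ∘ Prod.snd) hx'
        simpa [nsmul_eq_mul] using this
      have hk' : (k:ℤ) ≠ 0 := by exact_mod_cast hk.ne'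
      have hp0 : (toAdd x).1 = 0 := by
        rcases mul_eq_zero.mp hp with h | h
        · exact absurd h hk'
        · exact h
      have hq0 : (toAdd x).2.1 = 0 := by
        rcases mul_eq_zero.mp hq with h | h
        · exact absurd h hk'
        · exact h
      apply Subtype.ext
      show ofAdd (0, 0, (toAdd x).2.2) = x
      conv_rhs => rw [← ofAdd_toAdd x]
      congr 1
      exact Prod.ext hp0.symm (Prod.ext hq0.symm rfl)
    · intro r
      rfl
  rw [Nat.card_congr e, Nat.card_zmod]

end Aux

/-- For `m ≠ m'`, the groups `H_m` and `H_{m'}` are not isomorphic. -/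
theorem stmt_8 (m m' : ℕ) (hm : 0 < m) (hm' : 0 < m') (hne : m ≠ m') :
    IsEmpty (↥(Hsub m) ≃* ↥(Hsub m')) := by
  constructor
  intro φ
  -- transfer the isomorphism to quotients by the kernels (= commutator subgroups)
  have hmap : ((fH m).ker).map φ.toMonoidHom = (fH m').ker := by
    rw [ker_fH m hm, ker_fH m' hm', commutator, commutator,
      Subgroup.map_commutator]
    congr 1 <;>
      exact Subgroup.map_top_of_surjective _ φ.surjective
  haveI : ((fH m).ker).Normal := MonoidHom.normal_ker _
  haveI : ((fH m').ker).Normal := MonoidHom.normal_ker _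
  let ψ : Multiplicative (ℤ × ℤ × ZMod m) ≃* Multiplicative (ℤ × ℤ × ZMod m') :=
    ((QuotientGroup.quotientKerEquivOfSurjective (fH m) (fH_surjective m hm)).symm.trans
      (QuotientGroup.congr _ _ φ hmap)).trans
      (QuotientGroup.quotientKerEquivOfSurjective (fH m') (fH_surjective m' hm'))
  -- count elements of order dividing m * m'
  set k := m * m' with hkdef
  have hk : 0 < k := Nat.mul_pos hm hm'
  have eT : {x : Multiplicative (ℤ × ℤ × ZMod m) // x ^ k = 1} ≃
      {x : Multiplicative (ℤ × ℤ × ZMod m') // x ^ k = 1} := by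
    refine ⟨fun x => ⟨ψ x.1, by rw [← map_pow, x.2, _root_.map_one]⟩,
      fun x => ⟨ψ.symm x.1, by rw [← map_pow, x.2, _root_.map_one]⟩, ?_, ?_⟩
    · intro x; apply Subtype.ext; simp
    · intro x; apply Subtype.ext; simp
  have h1 := card_torsion m k hm hk ⟨m', rfl⟩
  have h2 := card_torsion m' k hm' hk ⟨m, mul_comm m m'⟩
  exact hne (by rw [← h1, Nat.card_congr eT, h2])
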